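/- Let f be a Boolean function on n variables with ANF coefficients a_f, and let g = (g_0,…,g_{n-1}) : 𝔽₂^m → 𝔽₂ⁿ be a vectorial Boolean function. If d_0,…,d_{n-1} ∈ ℤ ∪ {-∞} satisfy deg(g_i) ≤ d_i for all 0 ≤ i ≤ n-1, then the algebraic degree of the composite is bounded by the numeric mapping: deg(f ∘ g) ≤ max_{u : a_f(u) = 1} Σ_{i : u_i = 1} d_i (the empty sum is 0 and the maximum of the empty set is -∞). -/

import Mathlib

open Finset

section Core

variable {α : Type*}

/-- The monomial `x^u` over `𝔽₂`. -/
def monom [Fintype α] (u x : α → ZMod 2) : ZMod 2 :=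
  ∏ i, if u i = 1 then x i else 1

/-- The ANF coefficient of the monomial `x^u` in `f`, via Möbius inversion. -/
def anf [Fintype α] [DecidableEq α] (f : (α → ZMod 2) → ZMod 2) (u : α → ZMod 2) : ZMod 2 :=
  ∑ v ∈ Finset.univ.filter (fun v : α → ZMod 2 => ∀ i, v i = 1 → u i = 1), f v

/-- Hamming weight. -/
def wt [Fintype α] (u : α → ZMod 2) : ℕ :=
  (Finset.univ.filter (fun i => u i = 1)).card

/-- Algebraic degree, in `ℤ ∪ {-∞}`. -/
def deg [Fintype α] [DecidableEq α] (f : (α → ZMod 2) → ZMod 2) : WithBot ℤ :=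
  (Finset.univ.filter (fun u : α → ZMod 2 => anf f u = 1)).sup
    (fun u => ((wt u : ℤ) : WithBot ℤ))

/-- Combine an assignment on `I` with one on `Iᶜ` to a full assignment. -/
def combine [Fintype α] [DecidableEq α] (I : Finset α) (w : ↥I → ZMod 2)
    (y : ↥Iᶜ → ZMod 2) : α → ZMod 2 :=
  fun i => if h : i ∈ I then w ⟨i, h⟩ else y ⟨i, Finset.mem_compl.mpr h⟩

/-- The coefficient function `g_{f,w}` of `x_I^w` in `f`, a Boolean function of `x_{Iᶜ}`. -/
def coeffFun [Fintype α] [DecidableEq α] (f : (α → ZMod 2) → ZMod 2) (I : Finset α)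
    (w : ↥I → ZMod 2) : (↥Iᶜ → ZMod 2) → ZMod 2 :=
  fun y => ∑ t : ↥Iᶜ → ZMod 2, anf f (combine I w t) * monom t y

/-- The vector degree of `f` w.r.t. the index set `I`. -/
def vdeg [Fintype α] [DecidableEq α] (f : (α → ZMod 2) → ZMod 2) (I : Finset α)
    (w : ↥I → ZMod 2) : WithBot ℤ :=
  deg (coeffFun f I w)

/-- `f` with the variables outside `S` set to `0`. -/
def restrict0 [Fintype α] [DecidableEq α] (f : (α → ZMod 2) → ZMod 2) (S : Finset α) :
    (α → ZMod 2) → ZMod 2 :=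
  fun x => f (fun i => if i ∈ S then x i else 0)

/-- Combine an assignment on `I₁` with one on `I₂ \ I₁` to an assignment on `I₂`. -/
def joinFn [DecidableEq α] {I₁ I₂ : Finset α} (w : ↥I₁ → ZMod 2)
    (w' : ↥(I₂ \ I₁) → ZMod 2) : ↥I₂ → ZMod 2 :=
  fun j => if h : (j : α) ∈ I₁ then w ⟨(j : α), h⟩
           else w' ⟨(j : α), Finset.mem_sdiff.mpr ⟨j.2, h⟩⟩

end Core

/-- Coordinatewise OR of the family `W i`, over indices `i` with `u i = 1`. -/
def orFam {n : ℕ} {β : Type*} (u : Fin n → ZMod 2) (W : Fin n → β → ZMod 2) :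
    β → ZMod 2 :=
  fun j => if ∃ i, u i = 1 ∧ W i j = 1 then 1 else 0

/-- The vector numeric mapping `VDEG_d(f, V)`. -/
def VDEG {n : ℕ} {δ : Type*} [Fintype δ] [DecidableEq δ]
    (f : (Fin n → ZMod 2) → ZMod 2) (V : Fin n → (δ → ZMod 2) → WithBot ℤ)
    (w : δ → ZMod 2) : WithBot ℤ :=
  (Finset.univ.filter (fun p : (Fin n → ZMod 2) × (Fin n → δ → ZMod 2) =>
      anf f p.1 = 1 ∧ (∀ i, p.1 i = 0 → p.2 i = 0) ∧ w = orFam p.1 p.2)).sup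
    (fun p => ∑ i ∈ Finset.univ.filter (fun i => p.1 i = 1), V i (p.2 i))

/-- Monomial transition `π_u(x) → π_v(g(x))`. -/
def MonTrans {a b : ℕ} (g : (Fin a → ZMod 2) → (Fin b → ZMod 2))
    (u : Fin a → ZMod 2) (v : Fin b → ZMod 2) : Prop :=
  anf (fun x => monom v (g x)) u = 1

/-- Monomial trails from level `a` to level `b`, with fixed endpoints `u`, `v`
(trails are normalized to be `0` outside the levels `a, …, b`). -/
def Trails (n : ℕ → ℕ) (f : ∀ i, (Fin (n i) → ZMod 2) → (Fin (n (i + 1)) → ZMod 2))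
    (a b : ℕ) (u : Fin (n a) → ZMod 2) (v : Fin (n b) → ZMod 2) :
    Set (∀ i, Fin (n i) → ZMod 2) :=
  {t | t a = u ∧ t b = v ∧ (∀ i, a ≤ i → i < b → MonTrans (f i) (t i) (t (i + 1))) ∧
       (∀ i, i < a → t i = fun _ => 0) ∧ (∀ i, b < i → t i = fun _ => 0)}

/-- The iterated composition `f_{b-1} ∘ ⋯ ∘ f_a` (meaningful for `a ≤ b`). -/
def iterComp (n : ℕ → ℕ) (f : ∀ i, (Fin (n i) → ZMod 2) → (Fin (n (i + 1)) → ZMod 2))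
    (a : ℕ) : (b : ℕ) → (Fin (n a) → ZMod 2) → (Fin (n b) → ZMod 2)
  | 0 => fun x j => if h : a = 0 then x (Fin.cast (show n 0 = n a by rw [h]) j) else 0
  | b + 1 =>
      if h : a = b + 1 then fun x j => x (Fin.cast (show n (b + 1) = n a by rw [h]) j)
      else fun x => f b (iterComp n f a b x)

section Iterated

/-- Embed an index set `J ⊆ {0,…,n-1}` into the joint index set of size `n' 0 = n + m`. -/
def liftJ {n m N0 : ℕ} (h0 : N0 = n + m) (J : Finset (Fin n)) : Finset (Fin N0) :=
  J.image (fun (j : Fin n) => (⟨j.val, by have := j.isLt; omega⟩ : Fin N0))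

/-- Set the `x`-variables outside `S` to zero in a joint assignment. -/
def mask0 {n m N0 : ℕ} (h0 : N0 = n + m) (S : Finset (Fin n)) (z : Fin N0 → ZMod 2) :
    Fin N0 → ZMod 2 :=
  fun i => if h : (i : ℕ) < n then (if (⟨(i : ℕ), h⟩ : Fin n) ∈ S then z i else 0) else z i

/-- The iterated estimated vector degrees `V_t^S`. -/
def Vt {n m : ℕ} (n' : ℕ → ℕ) (h0 : n' 0 = n + m)
    (f : ∀ t, (Fin (n' t) → ZMod 2) → (Fin (n' (t + 1)) → ZMod 2))
    (J S : Finset (Fin n)) :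
    (t : ℕ) → Fin (n' (t + 1)) → (↥(liftJ h0 J) → ZMod 2) → WithBot ℤ
  | 0 => fun i => vdeg (fun z => f 0 (mask0 h0 S z) i) (liftJ h0 J)
  | t + 1 => fun i => VDEG (fun y => f (t + 1) y i) (Vt n' h0 f J S t)

/-- The estimated vector degree `vdeg-hat^S` (here `r = s + 2`). -/
def vdegHat {n m : ℕ} (n' : ℕ → ℕ) (h0 : n' 0 = n + m)
    (f : ∀ t, (Fin (n' t) → ZMod 2) → (Fin (n' (t + 1)) → ZMod 2))
    (J : Finset (Fin n)) (s : ℕ) (S : Finset (Fin n)) :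
    (↥(liftJ h0 J) → ZMod 2) → WithBot ℤ :=
  VDEG (fun y => monom (fun _ => 1) (f (s + 1) y)) (Vt n' h0 f J S s)

/-- The estimated degree `deg-hat^S`. -/
noncomputable def degHat {n m : ℕ} (n' : ℕ → ℕ) (h0 : n' 0 = n + m)
    (f : ∀ t, (Fin (n' t) → ZMod 2) → (Fin (n' (t + 1)) → ZMod 2))
    (J : Finset (Fin n)) (s : ℕ) (S : Finset (Fin n)) : WithBot ℤ :=
  Finset.univ.sup (fun w : ↥(liftJ h0 J) → ZMod 2 =>
    vdegHat n' h0 f J s S w + ((wt w : ℤ) : WithBot ℤ))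

end Iterated


section Helpers

set_option linter.unusedSectionVars false

variable {α : Type*} [Fintype α] [DecidableEq α]

lemma zmod2_cases (a : ZMod 2) : a = 0 ∨ a = 1 := by revert a; decide

lemma monom_ite (u x : α → ZMod 2) :
    monom u x = if (∀ i, u i = 1 → x i = 1) then 1 else 0 := by
  by_cases h : ∀ i, u i = 1 → x i = 1
  · rw [if_pos h]
    refine Finset.prod_eq_one fun i _ => ?_
    by_cases hi : u i = 1
    · rw [if_pos hi, h i hi]
    · rw [if_neg hi]
  · rw [if_neg h]
    push_neg at h
    obtain ⟨i, hui, hxi⟩ := h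
    refine Finset.prod_eq_zero (Finset.mem_univ i) ?_
    rw [if_pos hui]
    rcases zmod2_cases (x i) with h0 | h1
    · exact h0
    · exact absurd h1 hxi

lemma monom_eq_one_of (u x : α → ZMod 2) (h : ∀ i, u i = 1 → x i = 1) : monom u x = 1 := by
  rw [monom_ite, if_pos h]

lemma monom_eq_zero_of (u x : α → ZMod 2) (h : ¬ ∀ i, u i = 1 → x i = 1) : monom u x = 0 := by
  rw [monom_ite, if_neg h]

lemma anf_monom (v u : α → ZMod 2) : anf (monom v) u = if u = v then 1 else 0 := by
  unfold anf
  by_cases huv : u = v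
  · subst huv
    rw [if_pos rfl]
    rw [Finset.sum_eq_single u]
    · exact monom_eq_one_of _ _ (fun i h => h)
    · intro x hx hxu
      rw [Finset.mem_filter] at hx
      refine monom_eq_zero_of _ _ fun hux => hxu ?_
      funext i
      rcases zmod2_cases (x i) with h0 | h1
      · rcases zmod2_cases (u i) with g0 | g1
        · rw [h0, g0]
        · rw [hux i g1] at h0; exact absurd h0 (by decide)
      · rw [h1, hx.2 i h1]
    · intro h
      exact absurd (Finset.mem_filter.mpr ⟨Finset.mem_univ u, fun i h => h⟩) h
  · rw [if_neg huv]
    by_cases hle : ∀ i, v i = 1 → u i = 1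
    · -- v ≼ u, v ≠ u : pick j with u j = 1, v j = 0, use involution flipping j
      have hj : ∃ j, u j = 1 ∧ v j = 0 := by
        by_contra hcon
        push_neg at hcon
        apply huv
        funext i
        rcases zmod2_cases (v i) with h0 | h1
        · rcases zmod2_cases (u i) with g0 | g1
          · rw [g0, h0]
          · exact absurd h0 (hcon i g1)
        · rw [h1, hle i h1]
      obtain ⟨j, huj, hvj⟩ := hj
      refine Finset.sum_involution
        (fun x _ => Function.update x j (x j + 1)) ?_ ?_ ?_ ?_
      · intro x hx
        have : monom v (Function.update x j (x j + 1)) = monom v x := by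
          unfold monom
          refine Finset.prod_congr rfl fun i _ => ?_
          by_cases hij : i = j
          · subst hij
            rw [hvj]; norm_num
          · rw [Function.update_of_ne hij]
        rw [this]
        rcases zmod2_cases (monom v x) with h0 | h1
        · rw [h0]; rfl
        · rw [h1]; rfl
      · intro x hx _
        intro hcon
        have h2 := congrFun hcon j
        simp only [Function.update_self] at h2
        rcases zmod2_cases (x j) with h | h <;> rw [h] at h2 <;>
          exact absurd h2 (by decide)
      · intro x hx
        rw [Finset.mem_filter] at hx ⊢
        refine ⟨Finset.mem_univ _, fun i hi => ?_⟩
        by_cases hij : i = j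
        · subst hij; exact huj
        · simp only [Function.update_of_ne hij] at hi
          exact hx.2 i hi
      · intro x hx
        funext i
        by_cases hij : i = j
        · subst hij
          simp only [Function.update_self]
          rcases zmod2_cases (x i) with h | h <;> rw [h] <;> decide
        · simp only [Function.update_of_ne hij]
    · -- ¬ v ≼ u : all terms vanish
      refine Finset.sum_eq_zero fun x hx => ?_
      rw [Finset.mem_filter] at hx
      refine monom_eq_zero_of _ _ fun hvx => hle fun i hi => hx.2 i (hvx i hi)

lemma anf_eq_sum_monom (f : (α → ZMod 2) → ZMod 2) (u : α → ZMod 2) :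
    anf f u = ∑ v, monom v u * f v := by
  unfold anf
  rw [Finset.sum_filter]
  refine Finset.sum_congr rfl fun v _ => ?_
  by_cases h : ∀ i, v i = 1 → u i = 1
  · rw [if_pos h, monom_eq_one_of _ _ h, one_mul]
  · rw [if_neg h, monom_eq_zero_of _ _ h, zero_mul]

lemma expansion (f : (α → ZMod 2) → ZMod 2) (x : α → ZMod 2) :
    f x = ∑ u, anf f u * monom u x := by
  have key : ∀ u : α → ZMod 2, anf f u * monom u x = ∑ v, monom v u * f v * monom u x := by
    intro u; rw [anf_eq_sum_monom, Finset.sum_mul]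
  simp_rw [key]
  rw [Finset.sum_comm]
  have h4 : ∀ v : α → ZMod 2,
      (∑ u, monom v u * f v * monom u x) = (if x = v then 1 else 0) * f v := by
    intro v
    calc (∑ u, monom v u * f v * monom u x)
        = (∑ u, monom u x * monom v u) * f v := by
          rw [Finset.sum_mul]
          exact Finset.sum_congr rfl fun u _ => by ring
      _ = anf (monom v) x * f v := by rw [anf_eq_sum_monom]
      _ = (if x = v then 1 else 0) * f v := by rw [anf_monom]
  simp_rw [h4]
  simp only [ite_mul, one_mul, zero_mul]
  rw [Finset.sum_ite_eq (Finset.univ : Finset (α → ZMod 2)) x (fun v => f v)]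
  simp

lemma expansion' (f : (α → ZMod 2) → ZMod 2) (x : α → ZMod 2) :
    f x = ∑ u ∈ Finset.univ.filter (fun u => anf f u = 1), monom u x := by
  rw [expansion f x, Finset.sum_filter]
  refine Finset.sum_congr rfl fun u _ => ?_
  rcases zmod2_cases (anf f u) with h0 | h1
  · rw [h0, if_neg (by decide : ¬((0:ZMod 2) = 1)), zero_mul]
  · rw [h1, if_pos rfl, one_mul]

lemma deg_le_iff (f : (α → ZMod 2) → ZMod 2) (D : WithBot ℤ) :
    deg f ≤ D ↔ ∀ u, anf f u = 1 → ((wt u : ℤ) : WithBot ℤ) ≤ D := by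
  unfold deg
  rw [Finset.sup_le_iff]
  constructor
  · intro h u hu
    exact h u (Finset.mem_filter.mpr ⟨Finset.mem_univ _, hu⟩)
  · intro h u hu
    exact h u (Finset.mem_filter.mp hu).2

lemma anf_sum {ι : Type*} (s : Finset ι) (F : ι → (α → ZMod 2) → ZMod 2) (u : α → ZMod 2) :
    anf (fun x => ∑ p ∈ s, F p x) u = ∑ p ∈ s, anf (F p) u := by
  unfold anf
  rw [Finset.sum_comm]

lemma deg_sum_monom_le {ι : Type*} (s : Finset ι) (w : ι → α → ZMod 2) (D : WithBot ℤ)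
    (hw : ∀ p ∈ s, ((wt (w p) : ℤ) : WithBot ℤ) ≤ D) :
    deg (fun x => ∑ p ∈ s, monom (w p) x) ≤ D := by
  rw [deg_le_iff]
  intro u hu
  rw [anf_sum] at hu
  by_contra hcon
  have : ∀ p ∈ s, anf (monom (w p)) u = 0 := by
    intro p hp
    rw [anf_monom]
    rw [if_neg]
    intro h
    exact hcon (h ▸ hw p hp)
  rw [Finset.sum_eq_zero this] at hu
  exact absurd hu (by decide)

end Helpers

section BigOrHelpers

set_option linter.unusedSectionVars false

variable {α : Type*} [Fintype α] [DecidableEq α]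

/-- Coordinatewise OR over an index finset. -/
def bigOr {β ι : Type*} (T : Finset ι) (q : ι → β → ZMod 2) : β → ZMod 2 :=
  fun j => if ∃ i ∈ T, q i j = 1 then 1 else 0

lemma prod_monom {ι : Type*} [DecidableEq ι] (T : Finset ι) (q : ι → α → ZMod 2)
    (x : α → ZMod 2) :
    ∏ i ∈ T, monom (q i) x = monom (bigOr T q) x := by
  unfold bigOr
  by_cases h : ∀ i ∈ T, ∀ j, q i j = 1 → x j = 1
  · rw [Finset.prod_eq_one fun i hi => monom_eq_one_of _ _ (h i hi)]
    rw [monom_eq_one_of]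
    intro j hj
    by_cases hex : ∃ i ∈ T, q i j = 1
    · obtain ⟨i, hiT, hq⟩ := hex
      exact h i hiT j hq
    · rw [if_neg hex] at hj
      exact absurd hj (by decide)
  · push_neg at h
    obtain ⟨i, hiT, j, hq, hx⟩ := h
    rw [Finset.prod_eq_zero hiT (monom_eq_zero_of _ _ (by push_neg; exact ⟨j, hq, hx⟩))]
    rw [monom_eq_zero_of]
    push_neg
    exact ⟨j, by rw [if_pos ⟨i, hiT, hq⟩], hx⟩

lemma wt_bigOr {ι : Type*} [DecidableEq ι] (T : Finset ι) (q : ι → α → ZMod 2) :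
    wt (bigOr T q) ≤ ∑ i ∈ T, wt (q i) := by
  unfold wt bigOr
  calc (Finset.univ.filter
          (fun j => (if ∃ i ∈ T, q i j = 1 then (1:ZMod 2) else 0) = 1)).card
      ≤ (T.biUnion (fun i => Finset.univ.filter (fun j => q i j = 1))).card := by
        apply Finset.card_le_card
        intro j hj
        rw [Finset.mem_filter] at hj
        have hj2 := hj.2
        by_cases hex : ∃ i ∈ T, q i j = 1
        · obtain ⟨i, hiT, hq⟩ := hex
          exact Finset.mem_biUnion.mpr ⟨i, hiT,
            Finset.mem_filter.mpr ⟨Finset.mem_univ _, hq⟩⟩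
        · rw [if_neg hex] at hj2
          exact absurd hj2 (by decide)
    _ ≤ ∑ i ∈ T, (Finset.univ.filter (fun j => q i j = 1)).card :=
        Finset.card_biUnion_le

lemma cast_sum_nat {ι : Type*} (T : Finset ι) (c : ι → ℕ) :
    (((∑ i ∈ T, c i : ℕ) : ℤ) : WithBot ℤ) = ∑ i ∈ T, ((c i : ℤ) : WithBot ℤ) := by
  classical
  induction T using Finset.induction with
  | empty => simp
  | insert _ _ h ih =>
      rw [Finset.sum_insert h, Finset.sum_insert h, ← ih, Nat.cast_add, WithBot.coe_add]

end BigOrHelpers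


set_option maxHeartbeats 1000000 in
/-- The numeric mapping bounds the degree of a composite: if
`deg(g_i) ≤ d_i`, then `deg(f ∘ g) ≤ max_{u : a_f(u) = 1} Σ_{i : u_i = 1} d_i`. -/
theorem deg_comp_le_numeric {m n : ℕ} (f : (Fin n → ZMod 2) → ZMod 2)
    (g : (Fin m → ZMod 2) → (Fin n → ZMod 2)) (d : Fin n → WithBot ℤ)
    (hd : ∀ i, deg (fun x => g x i) ≤ d i) :
    deg (fun x => f (g x)) ≤
      (Finset.univ.filter (fun u : Fin n → ZMod 2 => anf f u = 1)).sup
        (fun u => ∑ i ∈ Finset.univ.filter (fun i => u i = 1), d i) := by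
  classical
  set U := Finset.univ.filter (fun u : Fin n → ZMod 2 => anf f u = 1) with hU
  set A : Fin n → Finset (Fin m → ZMod 2) :=
    fun i => Finset.univ.filter (fun a => anf (fun x => g x i) a = 1) with hA
  set t : (Fin n → ZMod 2) → Fin n → Finset (Fin m → ZMod 2) :=
    fun u i => if u i = 1 then A i else {fun _ => 0} with ht
  set s : Finset ((_ : Fin n → ZMod 2) × (Fin n → Fin m → ZMod 2)) :=
    U.sigma (fun u => Fintype.piFinset (t u)) with hs
  set w : ((_ : Fin n → ZMod 2) × (Fin n → Fin m → ZMod 2)) → Fin m → ZMod 2 :=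
    fun p => bigOr (Finset.univ.filter (fun i => p.1 i = 1)) p.2 with hw
  have hfg : (fun x => f (g x)) = fun x => ∑ p ∈ s, monom (w p) x := by
    funext x
    rw [hs, Finset.sum_sigma, expansion' f (g x)]
    refine Finset.sum_congr rfl fun u hu => ?_
    have h1 : monom u (g x) = ∏ i, ∑ a ∈ t u i, (if u i = 1 then monom a x else 1) := by
      unfold monom
      refine Finset.prod_congr rfl fun i _ => ?_
      by_cases hui : u i = 1
      · simp only [ht, if_pos hui]
        exact expansion' (fun x => g x i) x
      · simp only [ht, if_neg hui]
        rw [Finset.sum_singleton]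
    rw [h1, Finset.prod_univ_sum]
    refine Finset.sum_congr rfl fun p hp => ?_
    have h2 : ∏ i, (if u i = 1 then monom (p i) x else 1)
        = ∏ i ∈ Finset.univ.filter (fun i => u i = 1), monom (p i) x := by
      rw [Finset.prod_filter]
    rw [h2, prod_monom]
  rw [hfg]
  apply deg_sum_monom_le
  rintro ⟨u, p⟩ hp
  rw [hs, Finset.mem_sigma] at hp
  obtain ⟨huU, hpt⟩ := hp
  have hwt : wt (w ⟨u, p⟩) ≤ ∑ i ∈ Finset.univ.filter (fun i => u i = 1), wt (p i) :=
    wt_bigOr _ _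
  calc ((wt (w ⟨u, p⟩) : ℤ) : WithBot ℤ)
      ≤ (((∑ i ∈ Finset.univ.filter (fun i => u i = 1), wt (p i) : ℕ) : ℤ) : WithBot ℤ) := by
        exact_mod_cast WithBot.coe_le_coe.mpr (Int.ofNat_le.mpr hwt)
    _ = ∑ i ∈ Finset.univ.filter (fun i => u i = 1), ((wt (p i) : ℤ) : WithBot ℤ) :=
        cast_sum_nat _ _
    _ ≤ ∑ i ∈ Finset.univ.filter (fun i => u i = 1), d i := by
        refine Finset.sum_le_sum fun i hi => ?_
        rw [Finset.mem_filter] at hi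
        have hpi : p i ∈ t u i := Fintype.mem_piFinset.mp hpt i
        rw [ht] at hpi
        simp only [if_pos hi.2] at hpi
        rw [hA, Finset.mem_filter] at hpi
        refine le_trans ?_ (hd i)
        unfold deg
        exact Finset.le_sup (f := fun u => ((wt u : ℤ) : WithBot ℤ))
          (Finset.mem_filter.mpr ⟨Finset.mem_univ _, hpi.2⟩)
    _ ≤ U.sup (fun u => ∑ i ∈ Finset.univ.filter (fun i => u i = 1), d i) :=
        Finset.le_sup (f := fun u => ∑ i ∈ Finset.univ.filter (fun i => u i = 1), d i) huU
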